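/- Under the setting below, for every fixed ε ∈ ℝ^ℓ the function x ↦ φ(x, c(x) + Q(x)ε) is L_φ(L_c + √ℓ·L_q‖ε‖)-weakly convex on 𝒪, i.e., x ↦ φ(x, c(x)+Q(x)ε) + (L_φ(L_c + √ℓ L_q‖ε‖)/2)‖x‖² is convex on 𝒪. -/

import Mathlib

set_option maxHeartbeats 1000000

open scoped RealInnerProductSpace

noncomputable section

/-- The continuous linear map `ℝ^d → ℝ^ℓ` determined by its `ℓ` rows (as functionals). -/
def rowCLM {d l : ℕ} (rows : Fin l → (EuclideanSpace ℝ (Fin d) →L[ℝ] ℝ)) :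
    EuclideanSpace ℝ (Fin d) →L[ℝ] EuclideanSpace ℝ (Fin l) :=
  (((EuclideanSpace.equiv (Fin l) ℝ).symm :
      (Fin l → ℝ) →L[ℝ] EuclideanSpace ℝ (Fin l))).comp (ContinuousLinearMap.pi rows)

/-- `Q(x)`, the `ℓ×ℓ` matrix whose rows are `q_1(x)ᵀ, …, q_ℓ(x)ᵀ`, viewed as a linear map. -/
def Qop {d l : ℕ} (q : Fin l → EuclideanSpace ℝ (Fin d) → EuclideanSpace ℝ (Fin l))
    (x : EuclideanSpace ℝ (Fin d)) :
    EuclideanSpace ℝ (Fin l) →L[ℝ] EuclideanSpace ℝ (Fin l) :=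
  rowCLM (fun j => innerSL ℝ (q j x))

/-- Quadratic Taylor bound for a map whose derivative is Lipschitz on a convex set. -/
lemma taylor_quad {E F : Type*} [NormedAddCommGroup E] [NormedSpace ℝ E]
    [NormedAddCommGroup F] [NormedSpace ℝ F] {O : Set E} (hO : Convex ℝ O)
    {g : E → F} {G : E → E →L[ℝ] F} {M : ℝ}
    (hg : ∀ x ∈ O, HasFDerivAt g (G x) x)
    (hGlip : ∀ x ∈ O, ∀ y ∈ O, ‖G x - G y‖ ≤ M * ‖x - y‖)
    {z x : E} (hz : z ∈ O) (hx : x ∈ O) :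
    ‖g x - g z - G z (x - z)‖ ≤ M / 2 * ‖x - z‖ ^ 2 := by
  set v := x - z with hv
  have hseg : ∀ t ∈ Set.Icc (0:ℝ) 1, z + t • v ∈ O := by
    intro t ht
    have h := hO hz hx (by linarith [ht.2] : (0:ℝ) ≤ 1 - t) ht.1 (by ring)
    convert h using 1
    rw [hv]; module
  have hder : ∀ t ∈ Set.Icc (0:ℝ) 1,
      HasDerivAt (fun t : ℝ => g (z + t • v) - g z - t • (G z v))
        (G (z + t • v) v - G z v) t := by
    intro t ht
    have hline : HasDerivAt (fun t : ℝ => z + t • v) v t := by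
      simpa using ((hasDerivAt_id t).smul_const v).const_add z
    have h1 : HasDerivAt (fun t : ℝ => g (z + t • v)) (G (z + t • v) v) t :=
      (hg _ (hseg t ht)).comp_hasDerivAt t hline
    have h2 := (h1.sub_const (g z)).sub ((hasDerivAt_id t).smul_const (G z v))
    simp only [one_smul] at h2
    exact h2
  have hB : ∀ t : ℝ, HasDerivAt (fun t : ℝ => M / 2 * ‖v‖ ^ 2 * t ^ 2)
      (M * ‖v‖ ^ 2 * t) t := by
    intro t
    have h := (hasDerivAt_pow 2 t).const_mul (M / 2 * ‖v‖ ^ 2)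
    refine h.congr_deriv ?_
    push_cast; ring
  have key := image_norm_le_of_norm_deriv_right_le_deriv_boundary
    (f := fun t : ℝ => g (z + t • v) - g z - t • (G z v))
    (f' := fun t : ℝ => G (z + t • v) v - G z v) (a := 0) (b := 1)
    (fun t ht => (hder t ht).continuousAt.continuousWithinAt)
    (fun t ht => (hder t (Set.Ico_subset_Icc_self ht)).hasDerivWithinAt)
    (by simp) hB
    (by
      intro t ht
      have htO : z + t • v ∈ O := hseg t ⟨ht.1, le_of_lt ht.2⟩
      have h1 : ‖G (z + t • v) v - G z v‖ ≤ ‖G (z + t • v) - G z‖ * ‖v‖ := by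
        have := (G (z + t • v) - G z).le_opNorm v
        simpa using this
      have h2 : ‖G (z + t • v) - G z‖ ≤ M * (t * ‖v‖) := by
        have := hGlip _ htO _ hz
        simpa [norm_smul, abs_of_nonneg ht.1] using this
      calc ‖G (z + t • v) v - G z v‖ ≤ M * (t * ‖v‖) * ‖v‖ :=
            h1.trans (mul_le_mul_of_nonneg_right h2 (norm_nonneg v))
        _ = M * ‖v‖ ^ 2 * t := by ring)
  have := key (Set.mem_Icc.mpr ⟨zero_le_one, le_refl 1⟩)
  simpa [hv] using this

/-- Quadratic bound for the deviation from the secant line. -/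
lemma combo_quad {E F : Type*} [NormedAddCommGroup E] [NormedSpace ℝ E]
    [NormedAddCommGroup F] [NormedSpace ℝ F] {O : Set E} (hO : Convex ℝ O)
    {g : E → F} {G : E → E →L[ℝ] F} {M : ℝ}
    (hg : ∀ x ∈ O, HasFDerivAt g (G x) x)
    (hGlip : ∀ x ∈ O, ∀ y ∈ O, ‖G x - G y‖ ≤ M * ‖x - y‖)
    {x y : E} (hx : x ∈ O) (hy : y ∈ O) {a b : ℝ}
    (ha : 0 ≤ a) (hb : 0 ≤ b) (hab : a + b = 1) :
    ‖a • g x + b • g y - g (a • x + b • y)‖ ≤ M / 2 * (a * b * ‖x - y‖ ^ 2) := by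
  obtain rfl : b = 1 - a := by linarith
  set z := a • x + (1 - a) • y with hzdef
  have hz : z ∈ O := hO hx hy ha hb hab
  have hxz : x - z = (1 - a) • (x - y) := by rw [hzdef]; module
  have hyz : y - z = a • (y - x) := by rw [hzdef]; module
  have t1 := taylor_quad hO hg hGlip hz hx
  have t2 := taylor_quad hO hg hGlip hz hy
  have hsum : a • g x + (1 - a) • g y - g z =
      a • (g x - g z - G z (x - z)) + (1 - a) • (g y - g z - G z (y - z)) := by
    have hzero : a • (x - z) + (1 - a) • (y - z) = (0 : E) := by
      rw [hzdef]; module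
    have hmap : a • (G z (x - z)) + (1 - a) • (G z (y - z)) = 0 := by
      rw [← map_smul, ← map_smul, ← map_add, hzero, map_zero]
    have hexp : a • (g x - g z - G z (x - z)) + (1 - a) • (g y - g z - G z (y - z)) =
        a • g x + (1 - a) • g y - (a + (1 - a)) • g z -
          (a • (G z (x - z)) + (1 - a) • (G z (y - z))) := by module
    rw [hexp, hmap, sub_zero]
    norm_num
  rw [hsum]
  have hnxz : ‖x - z‖ = (1 - a) * ‖x - y‖ := by
    rw [hxz, norm_smul, Real.norm_eq_abs, abs_of_nonneg hb]
  have hnyz : ‖y - z‖ = a * ‖x - y‖ := by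
    rw [hyz, norm_smul, Real.norm_eq_abs, abs_of_nonneg ha, norm_sub_rev]
  calc ‖a • (g x - g z - G z (x - z)) + (1 - a) • (g y - g z - G z (y - z))‖
      ≤ a * ‖g x - g z - G z (x - z)‖ + (1 - a) * ‖g y - g z - G z (y - z)‖ := by
        refine (norm_add_le _ _).trans ?_
        rw [norm_smul, norm_smul, Real.norm_eq_abs, Real.norm_eq_abs,
          abs_of_nonneg ha, abs_of_nonneg hb]
    _ ≤ a * (M / 2 * ‖x - z‖ ^ 2) + (1 - a) * (M / 2 * ‖y - z‖ ^ 2) := by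
        exact add_le_add (mul_le_mul_of_nonneg_left t1 ha)
          (mul_le_mul_of_nonneg_left t2 hb)
    _ = M / 2 * (a * (1 - a) * ‖x - y‖ ^ 2) := by
        rw [hnxz, hnyz]; ring

theorem integrand_weakly_convex {d l : ℕ}
    (O : Set (EuclideanSpace ℝ (Fin d))) (hOopen : IsOpen O) (hOconv : Convex ℝ O)
    (φ : EuclideanSpace ℝ (Fin d) → EuclideanSpace ℝ (Fin l) → ℝ)
    (Lφ Lc Lq : ℝ) (hLφ : 0 ≤ Lφ) (hLc : 0 ≤ Lc) (hLq : 0 ≤ Lq)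
    (hφconv : ConvexOn ℝ (O ×ˢ (Set.univ : Set (EuclideanSpace ℝ (Fin l))))
      (fun p => φ p.1 p.2))
    (hφlip : ∀ x ∈ O, ∀ y ∈ O, ∀ u v : EuclideanSpace ℝ (Fin l),
      |φ x u - φ y v| ≤ Lφ * Real.sqrt (‖x - y‖ ^ 2 + ‖u - v‖ ^ 2))
    (c : EuclideanSpace ℝ (Fin d) → EuclideanSpace ℝ (Fin l))
    (hc : ContDiffOn ℝ 1 c O)
    (hcJ : ∀ x ∈ O, ∀ y ∈ O, ‖fderiv ℝ c x - fderiv ℝ c y‖ ≤ Lc * ‖x - y‖)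
    (q : Fin l → EuclideanSpace ℝ (Fin d) → EuclideanSpace ℝ (Fin l))
    (hq : ∀ j, ContDiffOn ℝ 1 (q j) O)
    (hqJ : ∀ j, ∀ x ∈ O, ∀ y ∈ O, ‖fderiv ℝ (q j) x - fderiv ℝ (q j) y‖ ≤ Lq * ‖x - y‖)
    (ε : EuclideanSpace ℝ (Fin l)) :
    ConvexOn ℝ O (fun x =>
      φ x (c x + Qop q x ε) + Lφ * (Lc + Real.sqrt l * Lq * ‖ε‖) / 2 * ‖x‖ ^ 2) := by
  classical
  set g : EuclideanSpace ℝ (Fin d) → EuclideanSpace ℝ (Fin l) :=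
    fun x => c x + Qop q x ε with hgdef
  set L : (Fin l → ℝ) →L[ℝ] EuclideanSpace ℝ (Fin l) :=
    ((EuclideanSpace.equiv (Fin l) ℝ).symm :
      (Fin l → ℝ) →L[ℝ] EuclideanSpace ℝ (Fin l)) with hLdef
  set R : EuclideanSpace ℝ (Fin d) → (EuclideanSpace ℝ (Fin d) →L[ℝ] EuclideanSpace ℝ (Fin l)) :=
    fun x => rowCLM (fun j => (innerSL ℝ ε).comp (fderiv ℝ (q j) x)) with hRdef
  set G : EuclideanSpace ℝ (Fin d) → (EuclideanSpace ℝ (Fin d) →L[ℝ] EuclideanSpace ℝ (Fin l)) :=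
    fun x => fderiv ℝ c x + R x with hGdef
  set M : ℝ := Lc + Real.sqrt l * Lq * ‖ε‖ with hMdef
  -- differentiability
  have hcd : ∀ x ∈ O, HasFDerivAt c (fderiv ℝ c x) x := fun x hx =>
    ((hc.differentiableOn one_ne_zero).differentiableAt (hOopen.mem_nhds hx)).hasFDerivAt
  have hqd : ∀ j, ∀ x ∈ O, HasFDerivAt (q j) (fderiv ℝ (q j) x) x := fun j x hx =>
    (((hq j).differentiableOn one_ne_zero).differentiableAt (hOopen.mem_nhds hx)).hasFDerivAt
  have hQval : ∀ x, Qop q x ε = L (fun j => innerSL ℝ ε (q j x)) := by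
    intro x
    show L (fun j => innerSL ℝ (q j x) ε) = _
    congr 1
    funext j
    exact real_inner_comm ε (q j x)
  have hg : ∀ x ∈ O, HasFDerivAt g (G x) x := by
    intro x hx
    have hpi : HasFDerivAt (fun x => (fun j => innerSL ℝ ε (q j x) : Fin l → ℝ))
        (ContinuousLinearMap.pi fun j => (innerSL ℝ ε).comp (fderiv ℝ (q j) x)) x :=
      hasFDerivAt_pi.2 fun j => ((innerSL ℝ ε).hasFDerivAt.comp x (hqd j x hx))
    have hQ : HasFDerivAt (fun x => Qop q x ε) (R x) x := by
      have := L.hasFDerivAt.comp x hpi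
      have heq : (fun x => L ((fun j => innerSL ℝ ε (q j x) : Fin l → ℝ))) =
          fun x => Qop q x ε := by
        funext x; rw [hQval x]
      rw [← heq]
      exact this
    exact (hcd x hx).add hQ
  -- Lipschitz bound on G
  have hGlip : ∀ x ∈ O, ∀ y ∈ O, ‖G x - G y‖ ≤ M * ‖x - y‖ := by
    intro x hx y hy
    have hR : ‖R x - R y‖ ≤ Real.sqrt l * Lq * ‖ε‖ * ‖x - y‖ := by
      refine ContinuousLinearMap.opNorm_le_bound _ (by positivity) fun v => ?_
      set w : EuclideanSpace ℝ (Fin l) := (R x - R y) v with hwdef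
      have hwj : ∀ j, w j = ⟪ε, (fderiv ℝ (q j) x - fderiv ℝ (q j) y) v⟫ := by
        intro j
        have : w j = innerSL ℝ ε ((fderiv ℝ (q j) x) v) -
            innerSL ℝ ε ((fderiv ℝ (q j) y) v) := by
          rw [hwdef]
          simp [hRdef, rowCLM, hLdef]
        rw [this]
        simp [inner_sub_right]
      set C : ℝ := Lq * ‖x - y‖ * ‖ε‖ * ‖v‖ with hCdef
      have hC : 0 ≤ C := by positivity
      have hwjle : ∀ j, ‖w j‖ ≤ C := by
        intro j
        rw [hwj j]
        calc ‖⟪ε, (fderiv ℝ (q j) x - fderiv ℝ (q j) y) v⟫‖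
            ≤ ‖ε‖ * ‖(fderiv ℝ (q j) x - fderiv ℝ (q j) y) v‖ := norm_inner_le_norm (𝕜 := ℝ) ε _
          _ ≤ ‖ε‖ * (‖fderiv ℝ (q j) x - fderiv ℝ (q j) y‖ * ‖v‖) := by
              gcongr
              exact (fderiv ℝ (q j) x - fderiv ℝ (q j) y).le_opNorm v
          _ ≤ ‖ε‖ * (Lq * ‖x - y‖ * ‖v‖) := by
              gcongr
              exact hqJ j x hx y hy
          _ = C := by rw [hCdef]; ring
      have hnorm : ‖w‖ ≤ Real.sqrt l * C := by
        rw [EuclideanSpace.norm_eq]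
        have hsum : ∑ j, ‖w j‖ ^ 2 ≤ (l : ℝ) * C ^ 2 := by
          calc ∑ j, ‖w j‖ ^ 2 ≤ ∑ _j : Fin l, C ^ 2 := by
                refine Finset.sum_le_sum fun j _ => ?_
                have := hwjle j
                nlinarith [norm_nonneg (w j)]
            _ = (l : ℝ) * C ^ 2 := by
                rw [Finset.sum_const, Finset.card_univ, Fintype.card_fin, nsmul_eq_mul]
        calc Real.sqrt (∑ j, ‖w j‖ ^ 2) ≤ Real.sqrt ((l : ℝ) * C ^ 2) :=
              Real.sqrt_le_sqrt hsum
          _ = Real.sqrt l * C := by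
              rw [Real.sqrt_mul (Nat.cast_nonneg l), Real.sqrt_sq hC]
      calc ‖(R x - R y) v‖ ≤ Real.sqrt l * C := hnorm
        _ = Real.sqrt l * Lq * ‖ε‖ * ‖x - y‖ * ‖v‖ := by rw [hCdef]; ring
    have hsplit : G x - G y = (fderiv ℝ c x - fderiv ℝ c y) + (R x - R y) := by
      rw [hGdef]; exact add_sub_add_comm _ _ _ _
    calc ‖G x - G y‖ ≤ ‖fderiv ℝ c x - fderiv ℝ c y‖ + ‖R x - R y‖ := by
          rw [hsplit]; exact norm_add_le _ _
      _ ≤ Lc * ‖x - y‖ + Real.sqrt l * Lq * ‖ε‖ * ‖x - y‖ := by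
          exact add_le_add (hcJ x hx y hy) hR
      _ = M * ‖x - y‖ := by rw [hMdef]; ring
  -- convexity
  refine ⟨hOconv, ?_⟩
  intro x hx y hy a b ha hb hab
  obtain rfl : b = 1 - a := by linarith
  simp only [smul_eq_mul]
  set z := a • x + (1 - a) • y with hzdef
  have hz : z ∈ O := hOconv hx hy ha hb hab
  have hcombo : ‖a • g x + (1 - a) • g y - g z‖ ≤ M / 2 * (a * (1 - a) * ‖x - y‖ ^ 2) :=
    combo_quad hOconv hg hGlip hx hy ha hb hab
  have hlip1 : φ z (g z) ≤ φ z (a • g x + (1 - a) • g y) +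
      Lφ * ‖a • g x + (1 - a) • g y - g z‖ := by
    have h := hφlip z hz z hz (g z) (a • g x + (1 - a) • g y)
    have h2 : Real.sqrt (‖z - z‖ ^ 2 + ‖g z - (a • g x + (1 - a) • g y)‖ ^ 2) =
        ‖a • g x + (1 - a) • g y - g z‖ := by
      rw [sub_self, norm_zero, norm_sub_rev]
      simp [Real.sqrt_sq (norm_nonneg _)]
    rw [h2] at h
    have := le_abs_self (φ z (g z) - φ z (a • g x + (1 - a) • g y))
    linarith
  have hconv : φ z (a • g x + (1 - a) • g y) ≤ a * φ x (g x) + (1 - a) * φ y (g y) := by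
    have h := hφconv.2 (Set.mk_mem_prod hx (Set.mem_univ (g x)))
      (Set.mk_mem_prod hy (Set.mem_univ (g y))) ha hb hab
    simpa [Prod.smul_mk, Prod.mk_add_mk, hzdef] using h
  have hnormid : ‖z‖ ^ 2 = a * ‖x‖ ^ 2 + (1 - a) * ‖y‖ ^ 2 - a * (1 - a) * ‖x - y‖ ^ 2 := by
    have h1 : ‖z‖ ^ 2 = a ^ 2 * ‖x‖ ^ 2 + 2 * (a * (1 - a)) * ⟪x, y⟫ + (1 - a) ^ 2 * ‖y‖ ^ 2 := by
      rw [hzdef, norm_add_sq_real, norm_smul, norm_smul, real_inner_smul_left,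
        real_inner_smul_right, Real.norm_eq_abs, Real.norm_eq_abs,
        abs_of_nonneg ha, abs_of_nonneg hb]
      ring
    have h2 : ‖x - y‖ ^ 2 = ‖x‖ ^ 2 - 2 * ⟪x, y⟫ + ‖y‖ ^ 2 := norm_sub_sq_real x y
    rw [h1, h2]; ring
  have hmul : Lφ * ‖a • g x + (1 - a) • g y - g z‖ ≤
      Lφ * (M / 2 * (a * (1 - a) * ‖x - y‖ ^ 2)) :=
    mul_le_mul_of_nonneg_left hcombo hLφ
  calc φ z (g z) + Lφ * M / 2 * ‖z‖ ^ 2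
      ≤ (a * φ x (g x) + (1 - a) * φ y (g y) + Lφ * (M / 2 * (a * (1 - a) * ‖x - y‖ ^ 2)))
        + Lφ * M / 2 * ‖z‖ ^ 2 := by linarith
    _ = a * (φ x (g x) + Lφ * M / 2 * ‖x‖ ^ 2) +
        (1 - a) * (φ y (g y) + Lφ * M / 2 * ‖y‖ ^ 2) := by
        rw [hnormid]; ring
end
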